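/- Let f be holomorphic on Ω and suppose there are M ≥ 0 and m ∈ ℝ such that the second complex partial derivative ∂²f/∂z₂² satisfies |∂²f/∂z₂²(z₁,z₂)| ≤ M for all (z₁,z₂) ∈ Ω and ψ(z₁) ≥ m for all z₁ ∈ 𝔻. Then there exists a constant C > 0 such that for every integer k ≥ 2 and every (z₁,z₂) ∈ Ω one has |a_k(z₁)·z₂^k| ≤ C/k². -/

import Mathlib

open Metric


open Real

lemma cauchy_estimate {h : ℂ → ℂ} {r M : ℝ} (hr : 0 < r)
    (hd : DifferentiableOn ℂ h (closedBall 0 r)) (hM : 0 ≤ M)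
    (hb : ∀ w ∈ closedBall (0 : ℂ) r, ‖h w‖ ≤ M) (n : ℕ) :
    ‖iteratedDeriv n h 0‖ ≤ n.factorial * M / r ^ n := by
  lift r to NNReal using hr.le
  have hr' : 0 < r := by exact_mod_cast hr
  have hps := hd.hasFPowerSeriesOnBall hr'
  set p := cauchyPowerSeries h 0 r with hp
  have key : (n.factorial : ℂ) • p n (fun _ => (1 : ℂ)) =
      iteratedFDeriv ℂ n h 0 (fun _ => (1 : ℂ)) := by
    have := hps.factorial_smul (1 : ℂ) n
    simpa [Nat.cast_smul_eq_nsmul] using this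
  have hcont : ContinuousOn (fun θ : ℝ => ‖h (circleMap 0 r θ)‖) (Set.uIcc 0 (2 * π)) := by
    apply ContinuousOn.norm
    exact hd.continuousOn.comp (continuous_circleMap 0 r).continuousOn
      (fun θ _ => circleMap_mem_closedBall 0 r.coe_nonneg θ)
  have hint : (∫ θ : ℝ in (0)..2 * π, ‖h (circleMap 0 r θ)‖) ≤ 2 * π * M := by
    have := intervalIntegral.integral_mono_on (by positivity : (0:ℝ) ≤ 2 * π)
      (hcont.intervalIntegrable) (intervalIntegrable_const (μ := MeasureTheory.volume))
      (fun θ _ => hb _ (circleMap_mem_closedBall 0 r.coe_nonneg θ))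
    simpa [mul_comm] using this
  have hpn : ‖p n‖ ≤ M * ((r : ℝ)⁻¹) ^ n := by
    refine (norm_cauchyPowerSeries_le h 0 r n).trans ?_
    have habs : |(r : ℝ)| = (r : ℝ) := abs_of_nonneg r.coe_nonneg
    rw [habs]
    gcongr
    rw [inv_mul_le_iff₀ (by positivity)]
    linarith [hint]
  have h1 : ‖iteratedDeriv n h 0‖ = n.factorial * ‖p n (fun _ => (1 : ℂ))‖ := by
    rw [iteratedDeriv_eq_iteratedFDeriv, ← key]
    simp [norm_smul]
  rw [h1]
  have h2 : ‖p n (fun _ => (1 : ℂ))‖ ≤ ‖p n‖ := by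
    simpa using (p n).le_opNorm (fun _ => (1 : ℂ))
  calc (n.factorial : ℝ) * ‖p n (fun _ => (1 : ℂ))‖
      ≤ n.factorial * (M * ((r : ℝ)⁻¹) ^ n) := by gcongr; exact h2.trans hpn
    _ = n.factorial * M / r ^ n := by rw [inv_pow]; ring



/-- The complete Hartogs domain `Ω = {(z₁,z₂) : z₁ ∈ 𝔻, |z₂| < e^{-ψ(z₁)}}`. -/
def HartogsDomain (ψ : ℂ → ℝ) : Set (ℂ × ℂ) :=
  {z : ℂ × ℂ | z.1 ∈ ball (0 : ℂ) 1 ∧ ‖z.2‖ < Real.exp (-ψ z.1)}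

/-- The `k`-th Taylor coefficient at `0` of the slice `z₂ ↦ f (z₁, z₂)`. -/
noncomputable def sliceCoeff (f : ℂ × ℂ → ℂ) (k : ℕ) (z₁ : ℂ) : ℂ :=
  iteratedDeriv k (fun w => f (z₁, w)) 0 / (Nat.factorial k : ℂ)

/-- If `∂²f/∂z₂²` is bounded on `Ω` and `ψ` is bounded below on `𝔻`, then
`|a_k(z₁) z₂^k| ≤ C / k²` uniformly on `Ω` for `k ≥ 2`. -/
theorem coeff_term_bound (ψ : ℂ → ℝ) (hψ : ContinuousOn ψ (ball (0 : ℂ) 1))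
    (f : ℂ × ℂ → ℂ) (hf : DifferentiableOn ℂ f (HartogsDomain ψ))
    (M : ℝ) (hM : 0 ≤ M) (m : ℝ)
    (hbd : ∀ z ∈ HartogsDomain ψ, ‖iteratedDeriv 2 (fun w => f (z.1, w)) z.2‖ ≤ M)
    (hm : ∀ z₁ ∈ ball (0 : ℂ) 1, m ≤ ψ z₁) :
    ∃ C : ℝ, 0 < C ∧ ∀ k : ℕ, 2 ≤ k → ∀ z ∈ HartogsDomain ψ,
      ‖sliceCoeff f k z.1 * z.2 ^ k‖ ≤ C / (k : ℝ) ^ 2 := by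
  set e := Real.exp (-m) with he
  refine ⟨2 * (M + 1) * e ^ 2, by positivity, ?_⟩
  intro k hk z hz
  obtain ⟨n, rfl⟩ : ∃ n, k = n + 2 := ⟨k - 2, by omega⟩
  obtain ⟨hz1, hz2⟩ := hz
  set R := Real.exp (-ψ z.1) with hR
  have hR0 : 0 < R := Real.exp_pos _
  have hRe : R ≤ e := Real.exp_le_exp.2 (by linarith [hm z.1 hz1])
  set a := ‖z.2‖ with ha
  have ha0 : 0 ≤ a := norm_nonneg _
  have haR : a < R := hz2
  set r := (a + R) / 2 with hr
  have hr0 : 0 < r := by positivity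
  have har : a ≤ r := by simp only [hr]; linarith
  have hrR : r < R := by simp only [hr]; linarith
  -- slice function
  set g : ℂ → ℂ := fun w => f (z.1, w) with hg
  have hgd : DifferentiableOn ℂ g (ball 0 R) := by
    intro w hw
    have hmem : ∀ x ∈ ball (0 : ℂ) R, (z.1, x) ∈ HartogsDomain ψ := fun x hx =>
      ⟨hz1, by simpa using mem_ball_zero_iff.1 hx⟩
    exact (hf _ (hmem w hw)).comp w
      (DifferentiableWithinAt.prodMk (differentiableAt_const z.1).differentiableWithinAt differentiableWithinAt_id)
      (fun x hx => hmem x hx)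
  have hga : AnalyticOnNhd ℂ g (ball 0 R) := hgd.analyticOnNhd isOpen_ball
  have hid2 : iteratedDeriv 2 g = deriv (deriv g) := by
    rw [iteratedDeriv_succ, iteratedDeriv_one]
  have hhd : DifferentiableOn ℂ (iteratedDeriv 2 g) (closedBall 0 r) := by
    rw [hid2]
    exact (hga.deriv.deriv).differentiableOn.mono
      (fun x hx => mem_ball_zero_iff.2 (lt_of_le_of_lt (mem_closedBall_zero_iff.1 hx) hrR))
  have hhb : ∀ w ∈ closedBall (0 : ℂ) r, ‖iteratedDeriv 2 g w‖ ≤ M := by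
    intro w hw
    have : (z.1, w) ∈ HartogsDomain ψ := ⟨hz1, by
      have := mem_closedBall_zero_iff.1 hw
      linarith⟩
    exact hbd (z.1, w) this
  have hce := cauchy_estimate hr0 hhd hM hhb n
  -- identify iterated derivatives
  have hiter : iteratedDeriv (n + 2) g 0 = iteratedDeriv n (iteratedDeriv 2 g) 0 := by
    simp only [iteratedDeriv_eq_iterate]
    rw [Function.iterate_add_apply deriv n 2 g]
  -- norm computation
  have hnorm : ‖sliceCoeff f (n + 2) z.1 * z.2 ^ (n + 2)‖
      = ‖iteratedDeriv (n + 2) g 0‖ / (n + 2).factorial * a ^ (n + 2) := by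
    simp only [sliceCoeff, norm_mul, norm_div, norm_pow, Complex.norm_natCast,
      ← ha, ← hg]
    try ring
  rw [hnorm, hiter]
  have hstep1 : ‖iteratedDeriv n (iteratedDeriv 2 g) 0‖ / (n + 2).factorial * a ^ (n + 2)
      ≤ (n.factorial * M / r ^ n) / (n + 2).factorial * (r ^ n * e ^ 2) := by
    have hak : a ^ (n + 2) ≤ r ^ n * e ^ 2 := by
      calc a ^ (n + 2) ≤ r ^ (n + 2) := pow_le_pow_left₀ ha0 har _
        _ = r ^ n * r ^ 2 := by ring
        _ ≤ r ^ n * e ^ 2 := by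
            gcongr
            exact hrR.le.trans hRe
    refine mul_le_mul ?_ hak (by positivity) (by positivity)
    gcongr
  -- final arithmetic
  refine hstep1.trans ?_
  have hfact : ((n + 2).factorial : ℝ) = (n + 2) * (n + 1) * n.factorial := by
    rw [Nat.factorial_succ, Nat.factorial_succ]
    push_cast
    ring
  have hne : (n.factorial : ℝ) ≠ 0 := by positivity
  have hfin : (n.factorial * M / r ^ n) / (n + 2).factorial * (r ^ n * e ^ 2)
      = M * e ^ 2 / ((n + 2) * (n + 1)) := by
    rw [hfact]
    field_simp
  rw [hfin]
  rw [div_le_div_iff₀ (by positivity) (by positivity)]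
  have hN : (0:ℝ) ≤ (n:ℝ) := Nat.cast_nonneg n
  have he2 : (0:ℝ) ≤ e ^ 2 := by positivity
  push_cast
  nlinarith [mul_nonneg (mul_nonneg hM he2) hN, mul_nonneg he2 hN,
    mul_nonneg (mul_nonneg (mul_nonneg hM he2) hN) hN, mul_nonneg (mul_nonneg he2 hN) hN]
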